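/- Countable unions of stable sets are measurable (Proposition 5 of the paper): Let A = ∪_{i∈ℕ} A_i where each A_i ∈ 𝒮 and the series Σ_{i∈ℕ} μ(A_i) is convergent. Then A is measurable and μ(A) = lim_{n→∞} μ(∪_{i≤n} A_i). If furthermore the A_i are pairwise disjoint, then μ(A) = Σ_{i∈ℕ} μ(A_i). -/

import Mathlib

open Filter Topology

/-- A series `Σ_{i∈ℕ} x i` converges to `s` if its partial sums `Σ_{i=0}^{N} x i`
converge to `s` as `N → ∞`. -/
def SeriesConvTo {G : Type*} [AddCommMonoid G] [TopologicalSpace G]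
    (x : ℕ → G) (s : G) : Prop :=
  Tendsto (fun N => ∑ i ∈ Finset.range (N + 1), x i) atTop (𝓝 s)

/-- `A ⊆ X` is measurable with measure value `L`: for every `m` there are a
stable set `Am m` and a sequence of stable sets `C m i` with `Σ_i μ (C m i)`
convergent (to `s m`), `A △ Am m ⊆ ⋃ i, C m i`, `s m → 0`, and moreover
`μ (Am m) → L`. -/
def RMeasureVal {G : Type*} [AddCommMonoid G] [TopologicalSpace G] {X : Type*}
    (S : Set (Set X)) (μ : Set X → G) (A : Set X) (L : G) : Prop :=
  ∃ (Am : ℕ → Set X) (C : ℕ → ℕ → Set X) (s : ℕ → G),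
    (∀ m, Am m ∈ S) ∧ (∀ m i, C m i ∈ S) ∧
    (∀ m, SeriesConvTo (fun i => μ (C m i)) (s m)) ∧
    (∀ m, symmDiff A (Am m) ⊆ ⋃ i, C m i) ∧
    Tendsto s atTop (𝓝 0) ∧
    Tendsto (fun m => μ (Am m)) atTop (𝓝 L)

/-- Countable unions of stable sets are measurable: if each `A i` is stable and
`Σ_i μ (A i)` converges to `s`, then `A = ⋃ i, A i` is measurable with measure
`L = lim_n μ (⋃_{i≤n} A i)`; if moreover the `A i` are pairwise disjoint, then
the measure of `A` equals `s = Σ_i μ (A i)`. -/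
theorem countable_union_of_stable_measurable {G : Type*} [AddCommGroup G]
    [UniformSpace G] [IsUniformAddGroup G] [CompleteSpace G] [T2Space G]
    [PartialOrder G] {X : Type*}
    (hadd : ∀ a b c : G, a ≤ b → a + c ≤ b + c)
    (hclosed : ∀ (u v : ℕ → G) (lu lv : G), (∀ n, u n ≤ v n) →
      Tendsto u atTop (𝓝 lu) → Tendsto v atTop (𝓝 lv) → lu ≤ lv)
    (hsqueeze : ∀ (u v w : ℕ → G), (∀ n, u n ≤ v n) → (∀ n, v n ≤ w n) →
      Tendsto u atTop (𝓝 (0 : G)) → Tendsto w atTop (𝓝 (0 : G)) →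
      Tendsto v atTop (𝓝 (0 : G)))
    (S : Set (Set X)) (μ : Set X → G)
    (hempty : ∅ ∈ S)
    (hunion : ∀ A B : Set X, A ∈ S → B ∈ S → A ∪ B ∈ S)
    (hinter : ∀ A B : Set X, A ∈ S → B ∈ S → A ∩ B ∈ S)
    (hdiff : ∀ A B : Set X, A ∈ S → B ∈ S → A \ B ∈ S)
    (hsubcover : ∀ A : Set X, A ∈ S → ∀ C : ℕ → Set X, (∀ i, C i ∈ S) →
      A ⊆ ⋃ i, C i → ∃ F : Finset ℕ, A ⊆ ⋃ i ∈ F, C i)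
    (hμadd : ∀ A B : Set X, A ∈ S → B ∈ S → Disjoint A B → μ (A ∪ B) = μ A + μ B)
    (hμpos : ∀ A : Set X, A ∈ S → 0 ≤ μ A)
    (A : ℕ → Set X) (hA : ∀ i, A i ∈ S)
    (s : G) (hs : SeriesConvTo (fun i => μ (A i)) s) :
    ∃ L : G, Tendsto (fun n => μ (⋃ i ∈ Finset.range (n + 1), A i)) atTop (𝓝 L) ∧
      RMeasureVal S μ (⋃ i, A i) L ∧
      (Pairwise (Function.onFun Disjoint A) → L = s) := by
  -- basic order facts
  have mono_add : ∀ a b c d : G, a ≤ b → c ≤ d → a + c ≤ b + d := by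
    intro a b c d h1 h2
    calc a + c ≤ b + c := hadd a b c h1
      _ = c + b := add_comm _ _
      _ ≤ d + b := hadd c d b h2
      _ = b + d := add_comm _ _
  have hsub : ∀ a b : G, a ≤ b → 0 ≤ b - a := by
    intro a b h
    have := hadd a b (-a) h
    simpa [sub_eq_add_neg] using this
  have hsub' : ∀ a b c d : G, a ≤ b → c ≤ d → a - d ≤ b - c := by
    intro a b c d h1 h2
    have h2' : -d ≤ -c := by
      have := hadd c d (-c - d) h2
      calc -d = c + (-c - d) := by abel
        _ ≤ d + (-c - d) := hadd c d _ h2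
        _ = -c := by abel
    simpa [sub_eq_add_neg] using mono_add a b (-d) (-c) h1 h2'
  -- monotonicity of μ
  have hmono : ∀ C D : Set X, C ∈ S → D ∈ S → C ⊆ D → μ C ≤ μ D := by
    intro C D hC hD hCD
    have h1 : μ D = μ C + μ (D \ C) := by
      calc μ D = μ (C ∪ D \ C) := by rw [Set.union_diff_cancel hCD]
        _ = μ C + μ (D \ C) := hμadd C (D \ C) hC (hdiff D C hD hC) Set.disjoint_sdiff_right
    have := mono_add (μ C) (μ C) 0 (μ (D \ C)) le_rfl (hμpos _ (hdiff D C hD hC))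
    simpa [h1] using this
  -- the partial unions and partial sums
  set B : ℕ → Set X := fun n => ⋃ i ∈ Finset.range (n + 1), A i with hB
  set q : ℕ → G := fun n => ∑ i ∈ Finset.range (n + 1), μ (A i) with hq
  have hq_tendsto : Tendsto q atTop (𝓝 s) := hs
  have hBsucc : ∀ n, B (n + 1) = B n ∪ A (n + 1) := by
    intro n
    show (⋃ i ∈ Finset.range (n + 1 + 1), A i) = (⋃ i ∈ Finset.range (n + 1), A i) ∪ A (n + 1)
    rw [Finset.range_add_one, Finset.set_biUnion_insert, Set.union_comm]
  have hBS : ∀ n, B n ∈ S := by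
    intro n
    induction n with
    | zero => simpa [hB] using hA 0
    | succ n ih => rw [hBsucc]; exact hunion _ _ ih (hA (n + 1))
  set p : ℕ → G := fun n => μ (B n) with hp
  have hpsucc : ∀ n, p (n + 1) = p n + μ (A (n + 1) \ B n) := by
    intro n
    have h1 : B (n + 1) = B n ∪ (A (n + 1) \ B n) := by
      rw [hBsucc, Set.union_diff_self]
    show μ (B (n + 1)) = μ (B n) + μ (A (n + 1) \ B n)
    rw [h1]
    exact hμadd _ _ (hBS n) (hdiff _ _ (hA (n + 1)) (hBS n)) Set.disjoint_sdiff_right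
  have hinc : ∀ n, 0 ≤ μ (A (n + 1) \ B n) ∧ μ (A (n + 1) \ B n) ≤ μ (A (n + 1)) :=
    fun n => ⟨hμpos _ (hdiff _ _ (hA (n + 1)) (hBS n)),
      hmono _ _ (hdiff _ _ (hA (n + 1)) (hBS n)) (hA (n + 1)) Set.diff_subset⟩
  -- key comparison
  have key : ∀ n k, p n ≤ p (n + k) ∧ p (n + k) - p n ≤ q (n + k) - q n := by
    intro n k
    induction k with
    | zero => simp
    | succ k ih =>
      have hps := hpsucc (n + k)
      have hqs : q (n + k + 1) = q (n + k) + μ (A (n + k + 1)) := by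
        simp [hq, Finset.sum_range_succ]
      constructor
      · calc p n ≤ p (n + k) := ih.1
          _ = p (n + k) + 0 := by rw [add_zero]
          _ ≤ p (n + k) + μ (A (n + k + 1) \ B (n + k)) :=
            mono_add _ _ _ _ le_rfl (hinc (n + k)).1
          _ = p (n + k + 1) := hps.symm
      · have : p (n + k + 1) - p n = (p (n + k) - p n) + μ (A (n + k + 1) \ B (n + k)) := by
          rw [hps]; abel
        rw [show n + (k + 1) = n + k + 1 from rfl, this, hqs]
        calc (p (n + k) - p n) + μ (A (n + k + 1) \ B (n + k))
            ≤ (q (n + k) - q n) + μ (A (n + k + 1)) :=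
              mono_add _ _ _ _ ih.2 (hinc (n + k)).2
          _ = q (n + k) + μ (A (n + k + 1)) - q n := by abel
  -- p is a Cauchy sequence
  have hcauchy : CauchySeq p := by
    rw [cauchySeq_iff_tendsto, uniformity_eq_comap_nhds_zero G, tendsto_comap_iff]
    have heq : ((fun x : G × G => x.2 - x.1) ∘ Prod.map p p) =
        fun x : ℕ × ℕ => p x.2 - p x.1 := rfl
    rw [heq, ← prod_atTop_atTop_eq]
    rw [tendsto_iff_seq_tendsto]
    intro x hx
    have hx1 : Tendsto (fun j => (x j).1) atTop atTop :=
      (tendsto_fst.comp hx)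
    have hx2 : Tendsto (fun j => (x j).2) atTop atTop :=
      (tendsto_snd.comp hx)
    set r : ℕ → ℕ := fun j => min (x j).1 (x j).2 with hr
    have hrt : Tendsto r atTop atTop := by
      rw [tendsto_atTop]
      intro b
      filter_upwards [hx1.eventually_ge_atTop b, hx2.eventually_ge_atTop b] with j h1 h2
      exact le_min h1 h2
    have qlim : ∀ (a : ℕ → ℕ), Tendsto a atTop atTop →
        Tendsto (fun j => q (a j) - q (r j)) atTop (𝓝 0) := by
      intro a ha
      have : Tendsto (fun j => q (a j) - q (r j)) atTop (𝓝 (s - s)) :=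
        (hq_tendsto.comp ha).sub (hq_tendsto.comp hrt)
      simpa using this
    have plim : ∀ (a : ℕ → ℕ), Tendsto a atTop atTop → (∀ j, r j ≤ a j) →
        Tendsto (fun j => p (a j) - p (r j)) atTop (𝓝 0) := by
      intro a ha hra
      refine hsqueeze (fun _ => 0) _ (fun j => q (a j) - q (r j)) ?_ ?_
        tendsto_const_nhds (qlim a ha)
      · intro j
        obtain ⟨k, hk⟩ := Nat.exists_eq_add_of_le (hra j)
        show (0 : G) ≤ p (a j) - p (r j)
        rw [hk]
        exact hsub _ _ (key (r j) k).1
      · intro j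
        obtain ⟨k, hk⟩ := Nat.exists_eq_add_of_le (hra j)
        show p (a j) - p (r j) ≤ q (a j) - q (r j)
        rw [hk]
        exact (key (r j) k).2
    have h1 := plim (fun j => (x j).1) hx1 (fun j => min_le_left _ _)
    have h2 := plim (fun j => (x j).2) hx2 (fun j => min_le_right _ _)
    have heq2 : ∀ j, (p ((x j).2) - p (r j)) - (p ((x j).1) - p (r j)) =
        p ((x j).2) - p ((x j).1) := fun j => by abel
    have h3 : Tendsto (fun j => p ((x j).2) - p ((x j).1)) atTop (𝓝 (0 - 0)) :=
      Tendsto.congr heq2 (h2.sub h1)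
    rw [sub_zero] at h3
    exact h3
  obtain ⟨L, hL⟩ := cauchySeq_tendsto_of_complete hcauchy
  refine ⟨L, hL, ?_, ?_⟩
  · -- measurability
    refine ⟨B, fun m i => A (m + 1 + i), fun m => s - q m, hBS, fun m i => hA _,
      ?_, ?_, ?_, hL⟩
    · intro m
      unfold SeriesConvTo
      have hsum : ∀ N, ∑ i ∈ Finset.range (N + 1), μ (A (m + 1 + i)) =
          q (m + 1 + N) - q m := by
        intro N
        have e1 : ∑ i ∈ Finset.range ((m + 1) + (N + 1)), μ (A i) =
            (∑ i ∈ Finset.range (m + 1), μ (A i)) +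
              ∑ i ∈ Finset.range (N + 1), μ (A (m + 1 + i)) :=
          Finset.sum_range_add _ _ _
        have e2 : (m + 1 + N) + 1 = (m + 1) + (N + 1) := by omega
        show _ = (∑ i ∈ Finset.range ((m + 1 + N) + 1), μ (A i)) -
          ∑ i ∈ Finset.range (m + 1), μ (A i)
        rw [e2, e1]
        abel
      simp only [hsum]
      have hshift : Tendsto (fun N => m + 1 + N) atTop atTop :=
        tendsto_atTop_mono (fun N => Nat.le_add_left N (m + 1)) tendsto_id
      have : Tendsto (fun N => q (m + 1 + N) - q m) atTop (𝓝 (s - q m)) :=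
        (hq_tendsto.comp hshift).sub tendsto_const_nhds
      exact this
    · intro m x hx
      have hBsubU : B m ⊆ ⋃ i, A i := by
        intro y hy
        simp only [hB, Set.mem_iUnion] at hy ⊢
        obtain ⟨i, _, hi⟩ := hy
        exact ⟨i, hi⟩
      rw [Set.symmDiff_def] at hx
      rcases hx with hx | hx
      · obtain ⟨hx1, hx2⟩ := hx
        simp only [Set.mem_iUnion] at hx1
        obtain ⟨i, hi⟩ := hx1
        have him : m + 1 ≤ i := by
          by_contra h
          push_neg at h
          exact hx2 (by
            simp only [hB, Set.mem_iUnion]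
            exact ⟨i, Finset.mem_range.2 h, hi⟩)
        simp only [Set.mem_iUnion]
        exact ⟨i - (m + 1), by rwa [show m + 1 + (i - (m + 1)) = i by omega]⟩
      · exact absurd (hBsubU hx.1) hx.2
    · have : Tendsto (fun m => s - q m) atTop (𝓝 (s - s)) :=
        tendsto_const_nhds.sub hq_tendsto
      simpa using this
  · -- disjoint case
    intro hdisj
    have hpq : ∀ n, p n = q n := by
      intro n
      induction n with
      | zero => simp [hp, hq, hB]
      | succ n ih =>
        have hdB : Disjoint (B n) (A (n + 1)) := by
          rw [Set.disjoint_left]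
          intro x hx hx'
          simp only [hB, Set.mem_iUnion] at hx
          obtain ⟨i, hi, hxi⟩ := hx
          have : i ≠ n + 1 := by
            have := Finset.mem_range.1 hi; omega
          exact Set.disjoint_left.1 (hdisj this) hxi hx'
        have : p (n + 1) = p n + μ (A (n + 1)) := by
          show μ (B (n + 1)) = μ (B n) + μ (A (n + 1))
          rw [hBsucc]
          exact hμadd _ _ (hBS n) (hA (n + 1)) hdB
        rw [this, ih]
        show (∑ i ∈ Finset.range (n + 1), μ (A i)) + μ (A (n + 1)) =
          ∑ i ∈ Finset.range (n + 1 + 1), μ (A i)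
        simp [Finset.sum_range_succ]
    have : Tendsto q atTop (𝓝 L) := by
      have := hL
      simp only [funext hpq] at this
      exact this
    exact tendsto_nhds_unique this hq_tendsto
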